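/- Let F be a spreading linear triple system on a finite set V with |V| = n > 5, and suppose T, T' ∈ F are adjacent triples. Then the number of triples T'' ∈ F that are adjacent to T' is at most C(n − Val(T) − 1, 2), where C(k,2) = k(k−1)/2 for k ≥ 2 and C(k,2) = 0 otherwise. -/
import Mathlib


open Finset

variable {α : Type*}

/-- A pair of (distinct) vertices is covered if it lies in some triple of `F`. -/
def Covered [DecidableEq α] (F : Finset (Finset α)) (x y : α) : Prop :=
  ∃ T ∈ F, x ∈ T ∧ y ∈ T

instance [DecidableEq α] (F : Finset (Finset α)) (x y : α) : Decidable (Covered F x y) :=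
  inferInstanceAs (Decidable (∃ T ∈ F, x ∈ T ∧ y ∈ T))

/-- Linear triple system on `V`. -/
def IsLinearTS [DecidableEq α] (V : Finset α) (F : Finset (Finset α)) : Prop :=
  (∀ T ∈ F, T ⊆ V ∧ T.card = 3) ∧
    ∀ x ∈ V, ∀ y ∈ V, x ≠ y → (F.filter fun T => x ∈ T ∧ y ∈ T).card ≤ 1

/-- Steiner triple system on `V`. -/
def IsSTS [DecidableEq α] (V : Finset α) (F : Finset (Finset α)) : Prop :=
  (∀ T ∈ F, T ⊆ V ∧ T.card = 3) ∧
    ∀ x ∈ V, ∀ y ∈ V, x ≠ y → (F.filter fun T => x ∈ T ∧ y ∈ T).card = 1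

/-- Neighbourhood of `V'` with respect to the triple system `F` on `V`. -/
def nbhd [DecidableEq α] (V : Finset α) (F : Finset (Finset α)) (V' : Finset α) : Finset α :=
  (V \ V').filter fun z => ∃ x ∈ V', ∃ y ∈ V', x ≠ y ∧ ({x, y, z} : Finset α) ∈ F

/-- `F` is spreading: the closure of every nontrivial subset is `V`. -/
def IsSpreading [DecidableEq α] (V : Finset α) (F : Finset (Finset α)) : Prop :=
  ∀ V' ⊆ V, 3 ≤ V'.card → V' ∉ F →
    ∀ W, V' ⊆ W → W ⊆ V → nbhd V F W = ∅ → W = V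

/-- `F` is weakly spreading. -/
def IsWeaklySpreading [DecidableEq α] (V : Finset α) (F : Finset (Finset α)) : Prop :=
  ∀ F' ⊆ F, 2 ≤ F'.card →
    ∀ W, F'.biUnion id ⊆ W → W ⊆ V → nbhd V F W = ∅ → W = V

/-- `Val(T)`: number of private neighbours of the triple `T`. -/
def valT [DecidableEq α] (V : Finset α) (F : Finset (Finset α)) (T : Finset α) : ℕ :=
  ((V \ T).filter fun v => (T.filter fun t => Covered F v t).card = 1).card

/-- Two triples are adjacent if pairs of each span a `C₄` in the complement of the skeleton. -/
def AdjT [DecidableEq α] (F : Finset (Finset α)) (T T' : Finset α) : Prop :=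
  ∃ v₁ ∈ T, ∃ v₂ ∈ T, ∃ u₁ ∈ T', ∃ u₂ ∈ T',
    v₁ ≠ v₂ ∧ u₁ ≠ u₂ ∧ v₁ ≠ u₁ ∧ v₁ ≠ u₂ ∧ v₂ ≠ u₁ ∧ v₂ ≠ u₂ ∧
    ¬Covered F v₁ u₁ ∧ ¬Covered F u₁ v₂ ∧ ¬Covered F v₂ u₂ ∧ ¬Covered F u₂ v₁

instance [DecidableEq α] (F : Finset (Finset α)) (T T' : Finset α) : Decidable (AdjT F T T') :=
  inferInstanceAs (Decidable (∃ v₁ ∈ T, ∃ v₂ ∈ T, ∃ u₁ ∈ T', ∃ u₂ ∈ T',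
    v₁ ≠ v₂ ∧ u₁ ≠ u₂ ∧ v₁ ≠ u₁ ∧ v₁ ≠ u₂ ∧ v₂ ≠ u₁ ∧ v₂ ≠ u₂ ∧
    ¬Covered F v₁ u₁ ∧ ¬Covered F u₁ v₂ ∧ ¬Covered F v₂ u₂ ∧ ¬Covered F u₂ v₁))

/-- `C(k,2) = k(k-1)/2` for `k ≥ 2`, and `0` otherwise. -/
def c2 (k : ℤ) : ℤ := if 2 ≤ k then k * (k - 1) / 2 else 0

lemma covered_symm [DecidableEq α] {F : Finset (Finset α)} {x y : α}
    (h : Covered F x y) : Covered F y x := by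
  obtain ⟨T, hT, h1, h2⟩ := h; exact ⟨T, hT, h2, h1⟩

lemma covered_self [DecidableEq α] {F : Finset (Finset α)} {T : Finset α} {x : α}
    (hT : T ∈ F) (hx : x ∈ T) : Covered F x x := ⟨T, hT, hx, hx⟩

/-- In a spreading system on more than 3 vertices there is no independent triangle. -/
lemma no_indep_triple [DecidableEq α] {V : Finset α} {F : Finset (Finset α)}
    (hS : IsSpreading V F) (hcard : 3 < V.card)
    {x y z : α} (hx : x ∈ V) (hy : y ∈ V) (hz : z ∈ V)
    (cxy : ¬Covered F x y) (cxz : ¬Covered F x z) (cyz : ¬Covered F y z)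
    (hxy : x ≠ y) (hxz : x ≠ z) (hyz : y ≠ z) : False := by
  set W : Finset α := {x, y, z} with hW
  have hWV : W ⊆ V := by
    intro w hw
    simp only [hW, mem_insert, mem_singleton] at hw
    rcases hw with rfl | rfl | rfl <;> assumption
  have hWcard : W.card = 3 := by
    rw [hW, card_insert_of_notMem (by simp [hxy, hxz]),
      card_insert_of_notMem (by simp [hyz]), card_singleton]
  have hWF : W ∉ F := fun h => cxy ⟨W, h, by simp [hW], by simp [hW]⟩
  have hnb : nbhd V F W = ∅ := by
    rw [nbhd, filter_eq_empty_iff]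
    rintro w hw ⟨p, hp, q, hq, hpq, hpqF⟩
    have hcov : Covered F p q := ⟨_, hpqF, by simp, by simp⟩
    simp only [hW, mem_insert, mem_singleton] at hp hq
    rcases hp with rfl | rfl | rfl <;> rcases hq with rfl | rfl | rfl <;>
      first
        | exact hpq rfl
        | exact cxy hcov
        | exact cxz hcov
        | exact cyz hcov
        | exact cxy (covered_symm hcov)
        | exact cxz (covered_symm hcov)
        | exact cyz (covered_symm hcov)
  have hVW := hS W hWV (by omega) hWF W Finset.Subset.rfl hWV hnb
  have : V.card = 3 := by rw [← hVW, hWcard]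
  omega

/-- Every vertex outside a triple is covered with some vertex of the triple. -/
lemma min_deg [DecidableEq α] {V : Finset α} {F : Finset (Finset α)}
    (hL : IsLinearTS V F) (hS : IsSpreading V F) (hcard : 4 < V.card)
    {T : Finset α} {v : α} (hT : T ∈ F) (hv : v ∈ V) (hvT : v ∉ T) :
    ∃ t ∈ T, Covered F v t := by
  by_contra h
  push_neg at h
  set W : Finset α := insert v T with hW
  have hTV := (hL.1 T hT).1
  have hT3 := (hL.1 T hT).2
  have hWV : W ⊆ V := insert_subset hv hTV
  have hWcard : W.card = 4 := by rw [hW, card_insert_of_notMem hvT, hT3]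
  have hWF : W ∉ F := fun hmem => by have := (hL.1 W hmem).2; omega
  have hnb : nbhd V F W = ∅ := by
    rw [nbhd, filter_eq_empty_iff]
    rintro w hw ⟨p, hp, q, hq, hpq, hpqF⟩
    rw [mem_sdiff] at hw
    rw [hW, mem_insert] at hp hq
    have hcov : Covered F p q := ⟨_, hpqF, by simp, by simp⟩
    rcases hp with rfl | hp
    · rcases hq with rfl | hq
      · exact hpq rfl
      · exact h q hq hcov
    · rcases hq with rfl | hq
      · exact h p hp (covered_symm hcov)
      · have hpV : p ∈ V := hTV hp
        have hqV : q ∈ V := hTV hq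
        have hle := hL.2 p hpV q hqV hpq
        have h1 : T ∈ F.filter (fun T => p ∈ T ∧ q ∈ T) := mem_filter.mpr ⟨hT, hp, hq⟩
        have h2 : ({p, q, w} : Finset α) ∈ F.filter (fun T => p ∈ T ∧ q ∈ T) :=
          mem_filter.mpr ⟨hpqF, by simp, by simp⟩
        have hEq : T = ({p, q, w} : Finset α) := by
          by_contra hne
          have : 1 < (F.filter (fun T => p ∈ T ∧ q ∈ T)).card :=
            one_lt_card.mpr ⟨T, h1, _, h2, hne⟩
          omega
        have hwW : w ∈ W := by
          rw [hW]
          exact mem_insert_of_mem (by rw [hEq]; simp)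
        exact hw.2 hwW
  have hVW := hS W hWV (by omega) hWF W Finset.Subset.rfl hWV hnb
  have : V.card = 4 := by rw [← hVW, hWcard]
  omega

/-- If `T, T'` are adjacent triples of a spreading linear triple system
on `n > 5` vertices, then `T'` has at most `C(n - Val(T) - 1, 2)` adjacent triples. -/
theorem statement_16 {α : Type*} [DecidableEq α] (V : Finset α) (F : Finset (Finset α))
    (n : ℕ) (hn : V.card = n) (hL : IsLinearTS V F) (hS : IsSpreading V F) (hV : 5 < n)
    (T T' : Finset α) (hT : T ∈ F) (hT' : T' ∈ F) (hAdj : AdjT F T T') :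
    ((F.filter fun T'' => AdjT F T' T'').card : ℤ)
      ≤ c2 ((n : ℤ) - (valT V F T : ℤ) - 1) := by
  classical
  obtain ⟨v₁, hv₁, v₂, hv₂, u₁, hu₁, u₂, hu₂, hv12, hu12, h11, h12, h21, h22,
    c11, cA, cB, c21⟩ := hAdj
  have hTV := (hL.1 T hT).1
  have hT3 := (hL.1 T hT).2
  have hT'V := (hL.1 T' hT').1
  have hT'3 := (hL.1 T' hT').2
  have n3 : 3 < V.card := by omega
  have n4 : 4 < V.card := by omega
  -- third vertex of T
  have hnsub : ¬ T ⊆ ({v₁, v₂} : Finset α) := by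
    intro hsub
    have h2 : ({v₁, v₂} : Finset α).card = 2 := by
      rw [card_insert_of_notMem (by simp [hv12]), card_singleton]
    have := card_le_card hsub
    omega
  obtain ⟨v₃, hv₃T, hv₃⟩ := not_subset.mp hnsub
  simp only [mem_insert, mem_singleton, not_or] at hv₃
  obtain ⟨hv₃1, hv₃2⟩ := hv₃
  have hTeq : ({v₁, v₂, v₃} : Finset α) = T := by
    apply eq_of_subset_of_card_le
    · intro w hw
      simp only [mem_insert, mem_singleton] at hw
      rcases hw with rfl | rfl | rfl <;> assumption
    · rw [hT3, card_insert_of_notMem (by simp [hv12, Ne.symm hv₃1]),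
        card_insert_of_notMem (by simp [Ne.symm hv₃2]), card_singleton]
  -- u₁, u₂ are outside T and covered with v₃
  have hu₁T : u₁ ∉ T := fun h => c11 ⟨T, hT, hv₁, h⟩
  have hu₂T : u₂ ∉ T := fun h => c21 ⟨T, hT, h, hv₁⟩
  have hcu₁ : Covered F u₁ v₃ := by
    obtain ⟨t, ht, hcov⟩ := min_deg hL hS n4 hT (hT'V hu₁) hu₁T
    rw [← hTeq] at ht
    simp only [mem_insert, mem_singleton] at ht
    rcases ht with rfl | rfl | rfl
    · exact absurd (covered_symm hcov) c11
    · exact absurd hcov cA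
    · exact hcov
  have hcu₂ : Covered F u₂ v₃ := by
    obtain ⟨t, ht, hcov⟩ := min_deg hL hS n4 hT (hT'V hu₂) hu₂T
    rw [← hTeq] at ht
    simp only [mem_insert, mem_singleton] at ht
    rcases ht with rfl | rfl | rfl
    · exact absurd hcov c21
    · exact absurd (covered_symm hcov) cB
    · exact hcov
  -- the excluded set
  set S : Finset α := (V \ T).filter (fun v => (T.filter fun t => Covered F v t).card = 1)
    with hSdef
  have hSval : valT V F T = S.card := rfl
  have hv₃S : v₃ ∉ S := by
    intro h
    have := (mem_sdiff.mp (mem_of_mem_filter v₃ h)).2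
    exact this hv₃T
  set U : Finset α := V \ insert v₃ S with hUdef
  have hEV : insert v₃ S ⊆ V :=
    insert_subset (hTV hv₃T) ((filter_subset _ _).trans sdiff_subset)
  have hUcard : U.card = V.card - (S.card + 1) := by
    rw [hUdef, card_sdiff_of_subset hEV, card_insert_of_notMem hv₃S]
  have hvalle : S.card ≤ n - 3 := by
    have h1 : S.card ≤ (V \ T).card := card_le_card (filter_subset _ _)
    have h2 : (V \ T).card = V.card - T.card := card_sdiff_of_subset hTV
    omega
  -- key step: every triple adjacent to T' contains a 2-subset of U
  have key : ∀ T'' ∈ F.filter (fun T'' => AdjT F T' T''),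
      ∃ p, p ∈ U.powersetCard 2 ∧ p ⊆ T'' := by
    intro T'' hmem
    rw [mem_filter] at hmem
    obtain ⟨hT''F, x₁, hx₁, x₂, hx₂, a, ha, b, hb, hx12, hab, e1a, e1b, e2a, e2b,
      d1, d2, d3, d4⟩ := hmem
    have hT''V := (hL.1 T'' hT''F).1
    have haV : a ∈ V := hT''V ha
    have hbV : b ∈ V := hT''V hb
    -- find a common vertex x of {x₁,x₂} and {u₁,u₂}
    have hsub : x₁ = u₁ ∨ x₁ = u₂ ∨ x₂ = u₁ ∨ x₂ = u₂ := by
      by_contra hc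
      push_neg at hc
      obtain ⟨q1, q2, q3, q4⟩ := hc
      have hsub4 : ({x₁, x₂, u₁, u₂} : Finset α) ⊆ T' := by
        intro w hw
        simp only [mem_insert, mem_singleton] at hw
        rcases hw with rfl | rfl | rfl | rfl <;> assumption
      have hc4 : ({x₁, x₂, u₁, u₂} : Finset α).card = 4 := by
        rw [card_insert_of_notMem (by simp [hx12, q1, q2]),
          card_insert_of_notMem (by simp [q3, q4]),
          card_insert_of_notMem (by simp [hu12]), card_singleton]
      have := card_le_card hsub4
      omega
    have hx : ∃ x, x ∈ V ∧ ¬Covered F a x ∧ ¬Covered F b x ∧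
        ¬Covered F v₁ x ∧ ¬Covered F v₂ x ∧ Covered F v₃ x := by
      rcases hsub with h | h | h | h
      · rw [h] at d1 d4
        exact ⟨u₁, hT'V hu₁, fun hc => d1 (covered_symm hc), d4, c11,
          fun hc => cA (covered_symm hc), covered_symm hcu₁⟩
      · rw [h] at d1 d4
        exact ⟨u₂, hT'V hu₂, fun hc => d1 (covered_symm hc), d4,
          fun hc => c21 (covered_symm hc), cB, covered_symm hcu₂⟩
      · rw [h] at d2 d3
        exact ⟨u₁, hT'V hu₁, d2, fun hc => d3 (covered_symm hc), c11,
          fun hc => cA (covered_symm hc), covered_symm hcu₁⟩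
      · rw [h] at d2 d3
        exact ⟨u₂, hT'V hu₂, d2, fun hc => d3 (covered_symm hc),
          fun hc => c21 (covered_symm hc), cB, covered_symm hcu₂⟩
    obtain ⟨x, hxV, nax, nbx, n1x, n2x, c3x⟩ := hx
    have haa : Covered F a a := covered_self hT''F ha
    have hbb : Covered F b b := covered_self hT''F hb
    have memU : ∀ w : α, w ∈ V → w ∈ T'' → ¬Covered F w x → w ∈ U := by
      intro w hwV hwT'' nwx
      have hww : Covered F w w := covered_self hT''F hwT''
      have hwv₁ : Covered F w v₁ := by
        by_contra hc
        refine no_indep_triple hS n3 hwV hxV (hTV hv₁) nwx hc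
          (fun hcov => n1x (covered_symm hcov)) ?_ ?_ ?_
        · exact fun hh => nwx (hh ▸ hww)
        · exact fun hh => hc (by rw [← hh]; exact hww)
        · exact fun hh => n1x (by rw [hh]; exact ⟨T, hT, hv₁, hv₁⟩)
      have hwv₂ : Covered F w v₂ := by
        by_contra hc
        refine no_indep_triple hS n3 hwV hxV (hTV hv₂) nwx hc
          (fun hcov => n2x (covered_symm hcov)) ?_ ?_ ?_
        · exact fun hh => nwx (hh ▸ hww)
        · exact fun hh => hc (by rw [← hh]; exact hww)
        · exact fun hh => n2x (by rw [hh]; exact ⟨T, hT, hv₂, hv₂⟩)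
      have hwS : w ∉ S := by
        intro hmemS
        rw [hSdef, mem_filter] at hmemS
        have hm1 : v₁ ∈ T.filter (fun t => Covered F w t) := mem_filter.mpr ⟨hv₁, hwv₁⟩
        have hm2 : v₂ ∈ T.filter (fun t => Covered F w t) := mem_filter.mpr ⟨hv₂, hwv₂⟩
        have : 1 < (T.filter (fun t => Covered F w t)).card :=
          one_lt_card.mpr ⟨v₁, hm1, v₂, hm2, hv12⟩
        omega
      have hwv₃ : w ≠ v₃ := fun hh => nwx (by rw [hh]; exact c3x)
      rw [hUdef, mem_sdiff]
      refine ⟨hwV, fun hmemE => ?_⟩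
      rcases mem_insert.mp hmemE with hh | hh
      · exact hwv₃ hh
      · exact hwS hh
    have haU : a ∈ U := memU a haV ha nax
    have hbU : b ∈ U := memU b hbV hb nbx
    refine ⟨{a, b}, mem_powersetCard.mpr ⟨?_, ?_⟩, ?_⟩
    · exact insert_subset haU (singleton_subset_iff.mpr hbU)
    · rw [card_insert_of_notMem (by simp [hab]), card_singleton]
    · exact insert_subset ha (singleton_subset_iff.mpr hb)
  -- injective map into 2-subsets of U
  have hcount : (F.filter fun T'' => AdjT F T' T'').card ≤ (U.powersetCard 2).card := by
    apply card_le_card_of_injOn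
      (fun T'' => if h : ∃ p, p ∈ U.powersetCard 2 ∧ p ⊆ T'' then h.choose else ∅)
    · intro T'' hmem
      have hex := key T'' hmem
      simp only [dif_pos hex]
      exact hex.choose_spec.1
    · intro T₁ h1 T₂ h2 hf
      rw [mem_coe] at h1 h2
      have hex1 := key T₁ h1
      have hex2 := key T₂ h2
      simp only [dif_pos hex1, dif_pos hex2] at hf
      obtain ⟨hp1, hp1sub⟩ := hex1.choose_spec
      obtain ⟨hp2, hp2sub⟩ := hex2.choose_spec
      rw [← hf] at hp2sub
      obtain ⟨hpU, hpcard⟩ := mem_powersetCard.mp hp1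
      obtain ⟨x, y, hxy, hpxy⟩ := card_eq_two.mp hpcard
      have hxp : x ∈ hex1.choose := by rw [hpxy]; simp
      have hyp : y ∈ hex1.choose := by rw [hpxy]; simp
      have hxV : x ∈ V := (sdiff_subset) (hpU hxp)
      have hyV : y ∈ V := (sdiff_subset) (hpU hyp)
      have hle := hL.2 x hxV y hyV hxy
      have hm1 : T₁ ∈ F.filter (fun Q => x ∈ Q ∧ y ∈ Q) :=
        mem_filter.mpr ⟨(mem_filter.mp h1).1, hp1sub hxp, hp1sub hyp⟩
      have hm2 : T₂ ∈ F.filter (fun Q => x ∈ Q ∧ y ∈ Q) :=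
        mem_filter.mpr ⟨(mem_filter.mp h2).1, hp2sub hxp, hp2sub hyp⟩
      by_contra hne
      have : 1 < (F.filter (fun Q => x ∈ Q ∧ y ∈ Q)).card :=
        one_lt_card.mpr ⟨T₁, hm1, T₂, hm2, hne⟩
      omega
  rw [card_powersetCard] at hcount
  -- final arithmetic
  have hm2 : 2 ≤ U.card := by omega
  have hcast : (n : ℤ) - (valT V F T : ℤ) - 1 = (U.card : ℤ) := by
    rw [hSval]
    omega
  rw [hcast, c2, if_pos (by exact_mod_cast hm2)]
  have h1 : 1 ≤ U.card := by omega
  have hev : Even (U.card * (U.card - 1)) := by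
    have := Nat.even_mul_succ_self (U.card - 1)
    rwa [Nat.sub_add_cancel h1, mul_comm] at this
  obtain ⟨k, hk⟩ := hev
  have hch : U.card.choose 2 = k := by rw [Nat.choose_two_right, hk]; omega
  have hc1 : ((U.card - 1 : ℕ) : ℤ) = (U.card : ℤ) - 1 := by omega
  have hz : (U.card : ℤ) * ((U.card : ℤ) - 1) = 2 * (k : ℤ) := by
    rw [← hc1, ← Nat.cast_mul]
    exact_mod_cast (by omega : U.card * (U.card - 1) = 2 * k)
  have hchoose : ((U.card.choose 2 : ℕ) : ℤ) = (U.card : ℤ) * ((U.card : ℤ) - 1) / 2 := by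
    rw [hch, hz]
    omega
  rw [hSval] at *
  calc ((F.filter fun T'' => AdjT F T' T'').card : ℤ) ≤ ((U.card.choose 2 : ℕ) : ℤ) := by
        exact_mod_cast hcount
    _ = (U.card : ℤ) * ((U.card : ℤ) - 1) / 2 := hchoose
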